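/- Let Θ be a closed linear subspace of ℓ∞ containing the canonical copy of c0. If Θ, with the norm induced from ℓ∞, is 1-separably injective, then Θ = ℓ∞. -/

import Mathlib

open Filter

/-- `c₀`: the subspace of `ℓ∞` of real sequences converging to `0`. -/
noncomputable def c0 : Submodule ℝ (lp (fun _ : ℕ => ℝ) ⊤) where
  carrier := {f | Tendsto (⇑f) atTop (nhds 0)}
  add_mem' := by
    intro f g hf hg
    show Tendsto (⇑(f + g)) atTop (nhds 0)
    have hadd : ⇑(f + g) = ⇑f + ⇑g := lp.coeFn_add f g
    rw [hadd]
    have h := hf.add hg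
    rw [add_zero] at h
    exact h
  zero_mem' := by
    have h0 : ⇑(0 : lp (fun _ : ℕ => ℝ) ⊤) = (0 : ∀ _ : ℕ, ℝ) := lp.coeFn_zero _ _
    show Tendsto _ atTop (nhds 0)
    rw [h0]
    exact tendsto_const_nhds
  smul_mem' := by
    intro c f hf
    show Tendsto (⇑(c • f)) atTop (nhds 0)
    have hsmul : ⇑(c • f) = c • ⇑f := lp.coeFn_smul c f
    rw [hsmul]
    have h := hf.const_smul c
    rw [smul_zero] at h
    exact h

/-- A real Banach space `X` is 1-separably injective: every bounded operator from a
closed subspace of any separable Banach space into `X` extends with the same norm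
bound. -/
def IsOneSepInjective (X : Type) [NormedAddCommGroup X] [NormedSpace ℝ X] : Prop :=
  ∀ (F : Type) [NormedAddCommGroup F] [NormedSpace ℝ F] [CompleteSpace F]
    [TopologicalSpace.SeparableSpace F],
    ∀ (E : Subspace ℝ F), IsClosed (E : Set F) →
      ∀ (t : E →L[ℝ] X), ∃ T : F →L[ℝ] X, (∀ e : E, T e = t e) ∧ ‖T‖ ≤ ‖t‖

local notation "L" => lp (fun _ : ℕ => ℝ) ⊤

set_option maxHeartbeats 1000000 in
set_option synthInstance.maxHeartbeats 200000 in
/-- A closed subspace of `ℓ∞` containing the canonical copy of `c₀` which is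
1-separably injective (in the induced norm) must be all of `ℓ∞`. -/
theorem oneSepInjective_subspace_of_linfty_containing_c0_eq_linfty
    (Θ : Submodule ℝ (lp (fun _ : ℕ => ℝ) ⊤))
    (hclosed : IsClosed (Θ : Set (lp (fun _ : ℕ => ℝ) ⊤)))
    (hc0 : c0 ≤ Θ)
    (hinj : IsOneSepInjective ↥Θ) :
    Θ = ⊤ := by
  classical
  rw [eq_top_iff]
  rintro x -
  let e : ℕ → L := fun n => lp.single ⊤ n (1 : ℝ)
  have he_c0 : ∀ n, e n ∈ c0 := by
    intro n
    show Tendsto (⇑(e n)) atTop (nhds 0)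
    have : ∀ᶠ k in atTop, (e n) k = 0 := by
      filter_upwards [eventually_gt_atTop n] with k hk
      exact lp.single_apply_ne (E := fun _ : ℕ => ℝ) ⊤ n 1 hk.ne'
    exact Tendsto.congr' (this.mono fun k hk => hk.symm) tendsto_const_nhds
  let E : Submodule ℝ L := (Submodule.span ℝ (Set.range e)).topologicalClosure
  have hEclosed : IsClosed (E : Set L) := Submodule.isClosed_topologicalClosure _
  have hEΘ : E ≤ Θ :=
    Submodule.topologicalClosure_minimal _
      (Submodule.span_le.2 (Set.range_subset_iff.2 fun n => hc0 (he_c0 n))) hclosed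
  let F : Submodule ℝ L := (Submodule.span ℝ (insert x (Set.range e))).topologicalClosure
  have hEF : E ≤ F :=
    Submodule.topologicalClosure_mono (Submodule.span_mono (Set.subset_insert _ _))
  have hxF : x ∈ F :=
    Submodule.le_topologicalClosure _ (Submodule.subset_span (Set.mem_insert _ _))
  have hFclosed : IsClosed (F : Set L) := Submodule.isClosed_topologicalClosure _
  haveI : CompleteSpace F := hFclosed.completeSpace_coe
  haveI : TopologicalSpace.SeparableSpace F := by
    have hsep : TopologicalSpace.IsSeparable (F : Set L) := by
      have : TopologicalSpace.IsSeparable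
          ((Submodule.span ℝ (insert x (Set.range e)) : Submodule ℝ L) : Set L) :=
        ((Set.countable_range e).insert x).isSeparable.span
      simpa [F, Submodule.topologicalClosure_coe] using this.closure
    exact hsep.separableSpace
  let E' : Submodule ℝ F := E.comap F.subtype
  have hE'closed : IsClosed (E' : Set F) := hEclosed.preimage continuous_subtype_val
  let tlin : E' →ₗ[ℝ] Θ :=
    { toFun := fun v => ⟨((v : F) : L), hEΘ v.2⟩
      map_add' := fun a b => rfl
      map_smul' := fun c a => rfl }
  have htlin : ∀ v : E', ‖tlin v‖ ≤ 1 * ‖v‖ := by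
    intro v
    rw [one_mul]
    exact le_of_eq rfl
  let t : E' →L[ℝ] Θ := tlin.mkContinuous 1 htlin
  have htnorm : ‖t‖ ≤ 1 := csInf_le ⟨0, fun _ h => h.1⟩ ⟨zero_le_one, htlin⟩
  obtain ⟨T, hTe, hTnorm⟩ := hinj F E' hE'closed t
  have hTnorm1 : ‖T‖ ≤ 1 := hTnorm.trans htnorm
  set y : L := ((T ⟨x, hxF⟩ : Θ) : L) with hy
  clear_value y
  have key : ∀ f, f ∈ E → ‖y - f‖ ≤ ‖x - f‖ := by
    intro f hf
    have hfF : f ∈ F := hEF hf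
    have hfE' : (⟨f, hfF⟩ : F) ∈ E' := hf
    have h1 : T ⟨f, hfF⟩ = ⟨f, hEΘ hf⟩ := by
      have := hTe ⟨⟨f, hfF⟩, hfE'⟩
      exact this
    have h2 : y - f = ((T ⟨x, hxF⟩ - T ⟨f, hfF⟩ : Θ) : L) := by
      rw [h1, hy]; rfl
    rw [h2]
    have h3 : ‖((T ⟨x, hxF⟩ - T ⟨f, hfF⟩ : Θ) : L)‖ = ‖T ⟨x, hxF⟩ - T ⟨f, hfF⟩‖ := rfl
    rw [h3, ← map_sub]
    calc ‖T (⟨x, hxF⟩ - ⟨f, hfF⟩)‖ ≤ ‖T‖ * ‖(⟨x, hxF⟩ - ⟨f, hfF⟩ : F)‖ := T.le_opNorm _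
      _ ≤ 1 * ‖(⟨x, hxF⟩ - ⟨f, hfF⟩ : F)‖ :=
          mul_le_mul_of_nonneg_right hTnorm1 (norm_nonneg _)
      _ = ‖x - f‖ := by rw [one_mul]; rfl
  have hxy : ∀ n : ℕ, x n = y n := by
    intro n
    by_contra hne
    set d : ℝ := x n - y n with hdd
    have hd : d ≠ 0 := sub_ne_zero.2 hne
    set R : ℝ := ‖x‖ + 1 with hR
    have hRx : ‖x‖ ≤ R := by simp [hR]
    have hR0 : (0:ℝ) ≤ R := le_trans (norm_nonneg x) hRx
    set s : ℝ := if 0 ≤ d then 1 else -1 with hs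
    set c : ℝ := x n + R * s with hc
    clear_value d R s c
    have henE : e n ∈ E :=
      Submodule.le_topologicalClosure _ (Submodule.subset_span ⟨n, rfl⟩)
    have hfE : c • e n ∈ E := Submodule.smul_mem _ _ henE
    have hkey := key (c • e n) hfE
    have hcoord : ∀ g : L, ∀ k, (g - c • e n) k = g k - c * (e n) k := by
      intro g k
      have h1 := lp.coeFn_sub g (c • e n)
      have h2 := lp.coeFn_smul c (e n)
      calc (g - c • e n) k = g k - (c • e n) k := by rw [h1]; rfl
        _ = g k - c * (e n) k := by rw [h2]; rfl
    have hen_self : (e n) n = 1 := lp.single_apply_self (E := fun _ : ℕ => ℝ) ⊤ n 1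
    have hen_ne : ∀ k, k ≠ n → (e n) k = 0 := fun k hk => lp.single_apply_ne (E := fun _ : ℕ => ℝ) ⊤ n 1 hk
    have habs_s : |s| = 1 := by
      rw [hs]; split_ifs <;> simp
    have hupper : ‖x - c • e n‖ ≤ R := by
      apply lp.norm_le_of_forall_le hR0
      intro k
      rcases eq_or_ne k n with rfl | hk
      · rw [hcoord x k, hen_self]
        have : x k - c * 1 = -(R * s) := by rw [hc]; ring
        rw [this]
        simp [Real.norm_eq_abs, abs_mul, habs_s, abs_of_nonneg hR0]
      · rw [hcoord x k, hen_ne k hk]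
        simpa using (lp.norm_apply_le_norm ENNReal.top_ne_zero x k).trans hRx
    have hlower : R + |d| ≤ ‖y - c • e n‖ := by
      have h1 : ‖(y - c • e n) n‖ ≤ ‖y - c • e n‖ :=
        lp.norm_apply_le_norm ENNReal.top_ne_zero (y - c • e n) n
      have h2 : (y - c • e n) n = -(d + R * s) := by
        rw [hcoord y n, hen_self, hc, hdd]; ring
      have h3 : ‖(y - c • e n) n‖ = R + |d| := by
        rw [h2, Real.norm_eq_abs, abs_neg]
        rw [hs]
        split_ifs with hds
        · rw [mul_one, abs_of_nonneg (by linarith), abs_of_nonneg hds]; ring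
        · rw [abs_of_neg (not_le.1 hds)]
          have : d + R * (-1) = -(R - d) := by ring
          rw [this, abs_neg, abs_of_nonneg (by linarith [not_le.1 hds])]
          ring
      rw [h3] at h1
      exact h1
    have : R + |d| ≤ R := le_trans hlower (le_trans hkey hupper)
    have : |d| ≤ 0 := by linarith
    exact hd (abs_nonpos_iff.1 this)
  have hxeq : x = y := lp.ext (funext hxy)
  rw [hxeq, hy]
  exact (T ⟨x, hxF⟩).2
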